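/- arXiv:2002.08876 — 2 statements merged into one kernel-verified Lean document; each statement's English description precedes it below -/
import Mathlib

section
/- Localization of a Lipschitz retraction. Let X ⊂ ℝ^n be open and let Γ ⊂ X be a Lipschitz neighborhood retract of X. Then for every open set U ⊂ X and every ε > 0, there exist a Lipschitz map p : ℝ^n → ℝ^n and an open set O ⊂ X with Γ ∩ U ⊂ O ⊂ U such that: |p − id| ≤ ε everywhere; p(O) ⊂ Γ; and p = id on Γ ∪ (ℝ^n ∖ U). Moreover p can be built so that its Lipschitz constant depends only on n and Γ (not on U and ε). -/
open MeasureTheory Metric Set Filter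
open scoped ENNReal NNReal Topology BigOperators

noncomputable section

namespace Paper

/-- Euclidean space ℝ^n. -/
abbrev Vn (n : ℕ) := EuclideanSpace ℝ (Fin n)

/-- The d-dimensional Hausdorff measure on ℝ^n. -/
abbrev HM (n d : ℕ) : Measure (Vn n) := Measure.hausdorffMeasure (d : ℝ)

/-- The scale radius `r_s(x)`; for `s = ∞` it equals the distance to the complement of `X`. -/
def scaleRadius {n : ℕ} (X : Set (Vn n)) (s : ℝ≥0∞) (x : Vn n) : ℝ≥0∞ :=
  if s = ⊤ then EMetric.infEdist x Xᶜ
  else min (s / (1 + s) * EMetric.infEdist x Xᶜ) s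

/-- Real version of the scale radius, for a finite scale `t`. -/
def scaleRadiusReal {n : ℕ} (X : Set (Vn n)) (t : ℝ) (x : Vn n) : ℝ :=
  (scaleRadius X (ENNReal.ofReal t) x).toReal

/-- `E` is relatively closed in `X`. -/
def RelClosedIn {n : ℕ} (X E : Set (Vn n)) : Prop :=
  ∃ C : Set (Vn n), IsClosed C ∧ E = C ∩ X

/-- `E` is `H^d` locally finite in `X`. -/
def HdLocallyFiniteOn (n d : ℕ) (X E : Set (Vn n)) : Prop :=
  ∀ x ∈ X, ∃ r : ℝ, 0 < r ∧ HM n d (E ∩ ball x r) < ⊤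

/-- The core `E^*` of `E` in `X`: the support of `H^d ⌞ E` in `X`. -/
def core (n d : ℕ) (X E : Set (Vn n)) : Set (Vn n) :=
  {x | x ∈ X ∧ ∀ r : ℝ, 0 < r → 0 < HM n d (E ∩ ball x r)}

/-- The support in `X` of a measure `μ`. -/
def suppIn {n : ℕ} (X : Set (Vn n)) (μ : Measure (Vn n)) : Set (Vn n) :=
  {x | x ∈ X ∧ ∀ r : ℝ, 0 < r → 0 < μ (ball x r)}

/-- A sliding deformation of `E` along the boundary `Γ` in the open set `U ⊆ X`. -/
structure IsSlidingDeformation {n : ℕ} (X Γ E U : Set (Vn n)) (f : Vn n → Vn n) : Prop where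
  lipschitz : ∃ K : ℝ≥0, LipschitzOnWith K f E
  mapsToX : ∀ x ∈ E, f x ∈ X
  homotopy : ∃ F : ℝ × Vn n → Vn n,
    ContinuousOn F (Set.Icc (0:ℝ) 1 ×ˢ E) ∧
    (∀ x ∈ E, F (0, x) = x) ∧
    (∀ x ∈ E, F (1, x) = f x) ∧
    (∀ t ∈ Set.Icc (0:ℝ) 1, ∀ x ∈ E, F (t, x) ∈ X) ∧
    (∀ t ∈ Set.Icc (0:ℝ) 1, ∀ x ∈ E ∩ Γ, F (t, x) ∈ Γ) ∧
    (∀ t ∈ Set.Icc (0:ℝ) 1, ∀ x ∈ E ∩ U, F (t, x) ∈ U) ∧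
    ∃ K : Set (Vn n), IsCompact K ∧ K ⊆ E ∩ U ∧
      ∀ t ∈ Set.Icc (0:ℝ) 1, ∀ x ∈ E \ K, F (t, x) = x

/-- A global sliding deformation in `U` is a sliding deformation of `X` itself. -/
def IsGlobalSlidingDeformation {n : ℕ} (X Γ U : Set (Vn n)) (f : Vn n → Vn n) : Prop :=
  IsSlidingDeformation X Γ X U f

/-- `E` is `(κ,h,s)`-quasiminimal with respect to the energy `I` along `Γ` in `X`. -/
def Quasiminimal {n : ℕ} (I : Measure (Vn n)) (X Γ E : Set (Vn n))
    (κ h : ℝ) (s : ℝ≥0∞) : Prop :=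
  ∀ (x : Vn n) (r : ℝ), 0 < r → ENNReal.ofReal r ≤ scaleRadius X s x → ball x r ⊆ X →
    ∀ f : Vn n → Vn n, IsSlidingDeformation X Γ E (ball x r) f →
      I {y | y ∈ E ∧ f y ≠ y} ≤
        ENNReal.ofReal κ * I (f '' {y | y ∈ E ∧ f y ≠ y}) +
        ENNReal.ofReal h * I (E ∩ ball x (h * r))

/-- Admissible energy in `X`, with comparability constant `Λ` (Definition of the paper). -/
structure AdmissibleEnergyWith {n : ℕ} (d : ℕ) (X : Set (Vn n)) (I : Measure (Vn n))
    (Λ : ℝ) : Prop where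
  one_le : 1 ≤ Λ
  le_hausdorff : ∀ A : Set (Vn n), A ⊆ X → I A ≤ ENNReal.ofReal Λ * HM n d A
  hausdorff_le : ∀ A : Set (Vn n), A ⊆ X → HM n d A ≤ ENNReal.ofReal Λ * I A
  tangentRatio : ∀ x ∈ X, ∀ W : AffineSubspace ℝ (Vn n), x ∈ W →
    Module.finrank ℝ W.direction = d →
    ∀ f : Vn n → Vn n, ContDiff ℝ 1 f → f x = x →
      (∀ v ∈ W.direction, fderiv ℝ f x v = v) →
      Tendsto (fun r : ℝ =>
          I (f '' ((W : Set (Vn n)) ∩ ball x r)) / I ((W : Set (Vn n)) ∩ ball x r))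
        (𝓝[>] 0) (𝓝 1)
  elliptic : ∀ x ∈ X, ∃ R : ℝ, 0 < R ∧ closedBall x R ⊆ X ∧ ∃ ε : ℝ → ℝ,
    (∀ r : ℝ, 0 < r → r ≤ R → 0 ≤ ε r) ∧ Tendsto ε (𝓝[>] 0) (𝓝 0) ∧
    ∀ r : ℝ, 0 < r → r ≤ R → ∀ W : AffineSubspace ℝ (Vn n), x ∈ W →
      Module.finrank ℝ W.direction = d →
      ∀ S : Set (Vn n), IsCompact S → S ⊆ closedBall x r → HM n d S < ⊤ →
        (¬ ∃ ψ : Vn n → Vn n, (∃ K : ℝ≥0, LipschitzOnWith K ψ (closedBall x r)) ∧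
            ψ '' closedBall x r ⊆ closedBall x r ∧
            (∀ y ∈ (W : Set (Vn n)) ∩ sphere x r, ψ y = y) ∧
            ψ '' S ⊆ (W : Set (Vn n)) ∩ sphere x r) →
        I ((W : Set (Vn n)) ∩ ball x r) ≤ I (S ∩ ball x r) + ENNReal.ofReal (ε r * r ^ d)

/-- Admissible energy in `X` (with an unspecified comparability constant). -/
def AdmissibleEnergy {n : ℕ} (d : ℕ) (X : Set (Vn n)) (I : Measure (Vn n)) : Prop :=
  ∃ Λ : ℝ, AdmissibleEnergyWith d X I Λ

/-- `E` is `H^d`-rectifiable: covered, up to an `H^d`-null set, by countably many Lipschitz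
images of subsets of `ℝ^d`. -/
def HdRectifiable (n d : ℕ) (E : Set (Vn n)) : Prop :=
  ∃ (f : ℕ → EuclideanSpace ℝ (Fin d) → Vn n) (A : ℕ → Set (EuclideanSpace ℝ (Fin d))),
    (∀ k, ∃ K : ℝ≥0, LipschitzOnWith K (f k) (A k)) ∧
    HM n d (E \ ⋃ k, f k '' A k) = 0

/-- Blow-up measures `(2r)^{-d} (H^d ⌞ F)(x + r(· - x))`. -/
def blowup (n d : ℕ) (F : Set (Vn n)) (x : Vn n) (r : ℝ) : Measure (Vn n) :=
  (ENNReal.ofReal (2 * r) ^ d)⁻¹ •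
    Measure.map (fun y => x + r⁻¹ • (y - x)) ((HM n d).restrict F)

/-- The linear subspace `W` is the direction of an approximate tangent `d`-plane of `F` at `x`:
the blow-up measures converge weakly to `H^d` restricted to the affine plane `x + W`. -/
def ApproxTangentAt (n d : ℕ) (F : Set (Vn n)) (x : Vn n) (W : Submodule ℝ (Vn n)) : Prop :=
  Module.finrank ℝ W = d ∧
  ∀ g : Vn n → ℝ, Continuous g → HasCompactSupport g →
    Tendsto (fun r : ℝ => ∫ y, g y ∂(blowup n d F x r)) (𝓝[>] 0)
      (𝓝 (∫ y, g y ∂((HM n d).restrict ((fun v => x + v) '' (W : Set (Vn n))))))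

/-- Weak convergence of a sequence of Radon measures, in the open set `X`. -/
def WeakTendstoIn {n : ℕ} (X : Set (Vn n)) (μ : ℕ → Measure (Vn n))
    (ν : Measure (Vn n)) : Prop :=
  ∀ g : Vn n → ℝ, Continuous g → HasCompactSupport g → tsupport g ⊆ X →
    Tendsto (fun i => ∫ y, g y ∂(μ i)) atTop (𝓝 (∫ y, g y ∂ν))

/-- Orthogonal projection onto a subspace, as a continuous linear map of the ambient space. -/
def projL {n : ℕ} (W : Submodule ℝ (Vn n)) : Vn n →L[ℝ] Vn n :=
  W.subtypeL.comp (Submodule.orthogonalProjectionOnto W)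

/-- `γ` is the Haar probability measure on the Grassmannian of `d`-planes of the subspace `W₀`
(realized as orthogonal projection operators): it is a probability measure carried by the set of
orthogonal projections onto `d`-dimensional subspaces of `W₀`, invariant under the conjugation
action of the orthogonal transformations preserving `W₀`. -/
def IsGrassHaar (n d : ℕ) (W₀ : Submodule ℝ (Vn n))
    (γ : Measure (Vn n →L[ℝ] Vn n)) : Prop :=
  IsProbabilityMeasure γ ∧
  γ {P | ¬ ∃ W : Submodule ℝ (Vn n), W ≤ W₀ ∧ Module.finrank ℝ W = d ∧ P = projL W} = 0 ∧
  ∀ g : Vn n ≃ₗᵢ[ℝ] Vn n, g '' (W₀ : Set (Vn n)) = (W₀ : Set (Vn n)) →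
    Measure.map (fun P => ((g.toContinuousLinearEquiv : Vn n →L[ℝ] Vn n).comp
        (P.comp ((g.symm.toContinuousLinearEquiv : Vn n →L[ℝ] Vn n))))) γ = γ

/-- `𝓘` is induced by a continuous integrand `i : X × G(d,n) → (0,∞)`. -/
def InducedByContinuousIntegrand {n : ℕ} (d : ℕ) (X : Set (Vn n))
    (I : Measure (Vn n)) : Prop :=
  ∃ i : Vn n × (Vn n →L[ℝ] Vn n) → ℝ,
    ContinuousOn i (X ×ˢ {P | ∃ W : Submodule ℝ (Vn n), Module.finrank ℝ W = d ∧ P = projL W}) ∧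
    (∀ p ∈ X ×ˢ {P | ∃ W : Submodule ℝ (Vn n), Module.finrank ℝ W = d ∧ P = projL W},
      0 < i p) ∧
    ∀ F : Set (Vn n), F ⊆ X → MeasurableSet F → HM n d F < ⊤ → HdRectifiable n d F →
      ∀ τ : Vn n → Submodule ℝ (Vn n),
        (∀ᵐ x ∂((HM n d).restrict F), ApproxTangentAt n d F x (τ x)) →
        I F = ∫⁻ x in F, ENNReal.ofReal (i (x, projL (τ x))) ∂(HM n d)

/-- A Lipschitz neighborhood retract of `X`. -/
def LipNbhdRetract {n : ℕ} (X Γ : Set (Vn n)) : Prop :=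
  ∃ O : Set (Vn n), IsOpen O ∧ Γ ⊆ O ∧ O ⊆ X ∧
    ∃ ρ : Vn n → Vn n, (∃ K : ℝ≥0, LipschitzOnWith K ρ O) ∧ ρ '' O ⊆ Γ ∧ ∀ x ∈ Γ, ρ x = x

/-- `Γ` is locally `C¹`-diffeomorphic to a cone. -/
def LocallyDiffeoToCone {n : ℕ} (X Γ : Set (Vn n)) : Prop :=
  ∀ x ∈ Γ, ∃ R : ℝ, 0 < R ∧ closedBall x R ⊆ X ∧
    ∃ O : Set (Vn n), IsOpen O ∧ x ∈ O ∧
    ∃ φ ψ : Vn n → Vn n,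
      ContDiffOn ℝ 1 φ (ball x R) ∧ ContDiffOn ℝ 1 ψ O ∧
      φ '' ball x R = O ∧ (∀ y ∈ ball x R, ψ (φ y) = y) ∧ (∀ z ∈ O, φ (ψ z) = z) ∧
      φ x = x ∧
      ∃ S : Set (Vn n), IsClosed S ∧ (∀ y ∈ S, ∀ t : ℝ, 0 ≤ t → x + t • (y - x) ∈ S) ∧
        φ '' (Γ ∩ ball x R) = S ∩ O

/-- A dyadic cell of the grid `𝓔_n(k)`. -/
def IsDyadicCell (n k : ℕ) (A : Set (Vn n)) : Prop :=
  ∃ (m : Fin n → ℤ) (α : Fin n → Bool),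
    A = {y : Vn n | ∀ i, y i ∈ Set.Icc ((m i : ℝ) * (2:ℝ) ^ (-(k:ℤ)))
        ((m i : ℝ) * (2:ℝ) ^ (-(k:ℤ)) + (if α i then (2:ℝ) ^ (-(k:ℤ)) else 0))}

/-- `φ` is `M`-bilipschitz on `S`. -/
def BilipschitzOnWith {n : ℕ} (M : ℝ) (φ : Vn n → Vn n) (S : Set (Vn n)) : Prop :=
  ∀ y ∈ S, ∀ z ∈ S, M⁻¹ * dist y z ≤ dist (φ y) (φ z) ∧ dist (φ y) (φ z) ≤ M * dist y z

/-- The grid axiom of Whitney subsets, with constant `M` and scale `t`. -/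
def WhitneyGridWith {n : ℕ} (X Γ : Set (Vn n)) (M t : ℝ) : Prop :=
  1 ≤ M ∧ 0 < t ∧
  ∀ x ∈ Γ, ∃ O : Set (Vn n), IsOpen O ∧
    ∃ φ : Vn n → Vn n, BilipschitzOnWith M φ (ball x (scaleRadiusReal X t x)) ∧
      φ '' ball x (scaleRadiusReal X t x) = O ∧
      ∃ k : ℕ, M⁻¹ * scaleRadiusReal X t x ≤ (2:ℝ) ^ (-(k:ℤ)) ∧
        ∃ S : Set (Set (Vn n)), (∀ A ∈ S, IsDyadicCell n k A) ∧
          φ '' (Γ ∩ ball x (scaleRadiusReal X t x)) = O ∩ ⋃₀ S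

/-- A Whitney subset of `X`, with explicit constants `M`, `t`. -/
def WhitneySubsetWith {n : ℕ} (X Γ : Set (Vn n)) (M t : ℝ) : Prop :=
  RelClosedIn X Γ ∧ LipNbhdRetract X Γ ∧ LocallyDiffeoToCone X Γ ∧ WhitneyGridWith X Γ M t

/-- A Whitney subset of `X`. -/
def WhitneySubset {n : ℕ} (X Γ : Set (Vn n)) : Prop :=
  ∃ M t : ℝ, WhitneySubsetWith X Γ M t

/-! Cells, complexes and charts. -/

/-- The reference cells `∏ [0, α_i]`, `α ∈ {-1,0,1}^n`, of the canonical `n`-complex `E_n`. -/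
def refCell (n : ℕ) (α : Fin n → Fin 3) : Set (Vn n) :=
  {y | ∀ i, y i ∈ Set.Icc (min 0 (![(-1:ℝ), 0, 1] (α i))) (max 0 (![(-1:ℝ), 0, 1] (α i)))}

/-- A similarity of `ℝ^n`. -/
def IsSimilarity {n : ℕ} (f : Vn n → Vn n) : Prop :=
  ∃ r : ℝ, 0 < r ∧ ∀ x y, dist (f x) (f y) = r * dist x y

/-- A cell of `ℝ^n`: a face of a cube, i.e. the image of a reference cell under a similarity. -/
def IsCell (n : ℕ) (A : Set (Vn n)) : Prop :=
  ∃ (f : Vn n → Vn n) (α : Fin n → Fin 3), IsSimilarity f ∧ A = f '' refCell n α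

/-- Interior of a cell relative to its affine span. -/
def cellInt {n : ℕ} (A : Set (Vn n)) : Set (Vn n) :=
  {x | x ∈ A ∧ ∃ ε : ℝ, 0 < ε ∧ ∀ y ∈ (affineSpan ℝ A : Set (Vn n)), dist y x < ε → y ∈ A}

/-- Boundary of a cell relative to its affine span. -/
def cellBry {n : ℕ} (A : Set (Vn n)) : Set (Vn n) := A \ cellInt A

/-- Dimension of a cell: the dimension of its affine span. -/
def cellDim {n : ℕ} (A : Set (Vn n)) : ℕ :=
  Module.finrank ℝ (affineSpan ℝ A).direction

/-- A complex of cells. -/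
def IsComplex {n : ℕ} (K : Set (Set (Vn n))) : Prop :=
  (∀ A ∈ K, IsCell n A) ∧
  (∀ A ∈ K, ∀ B ∈ K, A ≠ B → cellInt A ∩ cellInt B = ∅) ∧
  (∀ x ∈ ⋃₀ K, ∃ U : Set (Vn n), IsOpen U ∧ x ∈ U ∧ {A ∈ K | (A ∩ U).Nonempty}.Finite) ∧
  (∀ A ∈ K, ∃ U : Set (Vn n), IsOpen U ∧ cellInt A ⊆ U ∧
      U ∩ ⋃₀ K ⊆ ⋃ B ∈ {B ∈ K | A ⊆ B}, cellInt B)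

/-- The set `V_A = ⋃ {int B | B ∈ K, A ⊆ B}`. -/
def cellNbhd {n : ℕ} (K : Set (Set (Vn n))) (A : Set (Vn n)) : Set (Vn n) :=
  ⋃ B ∈ {B ∈ K | A ⊆ B}, cellInt B

/-- An `n`-chart: the image of the canonical `n`-complex `E_n` under a similarity. -/
def IsChart {n : ℕ} (K : Set (Set (Vn n))) : Prop :=
  ∃ f : Vn n → Vn n, IsSimilarity f ∧ K = {A | ∃ α : Fin n → Fin 3, A = f '' refCell n α}

/-- A system of `n`-charts. -/
def IsChartSystem {n : ℕ} {ι : Type} (K : ι → Set (Set (Vn n))) : Prop :=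
  (∀ a, IsChart (K a)) ∧
  (∀ A ∈ ⋃ a, K a, ∀ B ∈ ⋃ a, K a, (cellInt A ∩ cellInt B).Nonempty →
      cellInt A ⊆ cellInt B ∨ cellInt B ⊆ cellInt A) ∧
  (∀ x ∈ ⋃ a, ⋃₀ (K a), ∃ U : Set (Vn n), IsOpen U ∧ x ∈ U ∧
      ∃ S : Set (Set (Vn n)), S.Finite ∧ S ⊆ ⋃ a, K a ∧
        ∀ A ∈ ⋃ a, K a, (A ∩ (U ∩ ⋃ a, ⋃₀ (K a))).Nonempty →
          ∃ B ∈ S, cellInt A ⊆ cellInt B)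

/-- The limit of a system of `n`-charts: the collection of its maximal cells. -/
def systemLimit {n : ℕ} {ι : Type} (K : ι → Set (Set (Vn n))) : Set (Set (Vn n)) :=
  {A | A ∈ ⋃ a, K a ∧ ∀ B ∈ ⋃ a, K a, (cellInt A ∩ cellInt B).Nonempty → cellInt B ⊆ cellInt A}

/-- An `n`-complex: the limit of a system of `n`-charts. -/
def IsNComplex {n : ℕ} (K : Set (Set (Vn n))) : Prop :=
  ∃ (ι : Type) (Kα : ι → Set (Set (Vn n))), IsChartSystem Kα ∧ K = systemLimit Kα

/-- A subcomplex of `K`. -/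
def IsSubcomplex {n : ℕ} (K L : Set (Set (Vn n))) : Prop :=
  L ⊆ K ∧ ∀ A ∈ L, ∀ B ∈ K, A ⊆ B → B ∈ L

/-- The rigid open set `U(L)` induced by a set of cells. -/
def rigidOpen {n : ℕ} (L : Set (Set (Vn n))) : Set (Vn n) :=
  ⋃ A ∈ L, cellInt A

/-- `φ` is locally Lipschitz on `S`. -/
def LocallyLipschitzOn {n : ℕ} (S : Set (Vn n)) (φ : Vn n → Vn n) : Prop :=
  ∀ x ∈ S, ∃ U : Set (Vn n), IsOpen U ∧ x ∈ U ∧ ∃ c : ℝ≥0, LipschitzOnWith c φ (U ∩ S)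

/-- The union of interiors of cells of dimension `> d`. -/
def highSkel {n : ℕ} (K : Set (Set (Vn n))) (d : ℕ) : Set (Vn n) :=
  ⋃ A ∈ {A ∈ K | d < cellDim A}, cellInt A

/-- Upper Lebesgue integral (infimum of integrals of measurable majorants). -/
def upperLintegral {α : Type*} [MeasurableSpace α] (μ : Measure α) (s : Set α)
    (f : α → ℝ≥0∞) : ℝ≥0∞ :=
  ⨅ (g : α → ℝ≥0∞) (_ : Measurable g) (_ : ∀ x, f x ≤ g x), ∫⁻ x in s, g x ∂μ

/-- The norm of a linear map restricted to a subset `S`. -/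
def opNormOn {n : ℕ} (u : Vn n →L[ℝ] Vn n) (S : Set (Vn n)) : ℝ :=
  sSup ((fun x => ‖u x‖) '' {x ∈ S | ‖x‖ ≤ 1})


set_option maxHeartbeats 2000000 in
/-- **Localization of a Lipschitz retraction.** -/
theorem localized_retraction (n : ℕ) (X : Set (Vn n)) (hX : IsOpen X)
    (Γ : Set (Vn n)) (hΓc : RelClosedIn X Γ) (hΓ : LipNbhdRetract X Γ) :
    ∃ C : ℝ≥0, ∀ U : Set (Vn n), IsOpen U → U ⊆ X → ∀ ε : ℝ, 0 < ε →
      ∃ (p : Vn n → Vn n) (O : Set (Vn n)),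
        LipschitzWith C p ∧
        IsOpen O ∧ Γ ∩ U ⊆ O ∧ O ⊆ U ∧
        (∀ x, dist (p x) x ≤ ε) ∧
        p '' O ⊆ Γ ∧
        (∀ x ∈ Γ ∪ Uᶜ, p x = x) := by
  classical
  obtain ⟨O₀, hO₀o, hΓO₀, hO₀X, ρ, ⟨K, hρK⟩, hρim, hρid⟩ := hΓ
  refine ⟨4 * K + 5, ?_⟩
  intro U hUo hUX ε hε
  by_cases hne : (Γ ∩ U).Nonempty
  swap
  · rw [Set.not_nonempty_iff_eq_empty] at hne
    refine ⟨id, ∅, ?_, isOpen_empty, by simp [hne], by simp, by simp [hε.le], by simp, by simp⟩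
    exact LipschitzWith.id.weaken (by
      have : (0:ℝ≥0) ≤ K := zero_le
      calc (1:ℝ≥0) ≤ 5 := by norm_num
        _ ≤ 4 * K + 5 := le_add_self)
  have hΓne : Γ.Nonempty := ⟨hne.choose, hne.choose_spec.1⟩
  set k : ℝ := (K : ℝ) + 1 with hkdef
  have hK0 : (0:ℝ) ≤ (K:ℝ) := K.coe_nonneg
  have hk1 : (1:ℝ) ≤ k := by rw [hkdef]; linarith
  have hk0 : (0:ℝ) < k := lt_of_lt_of_le one_pos hk1
  set ε' : ℝ := ε / k with hε'def
  have hε'pos : 0 < ε' := div_pos hε hk0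
  have hkε' : k * ε' = ε := by
    rw [hε'def]; field_simp
  set dU : Vn n → ℝ := fun x => if Uᶜ.Nonempty then Metric.infDist x Uᶜ else ε' with hdU
  set dO : Vn n → ℝ := fun x => if O₀ᶜ.Nonempty then Metric.infDist x O₀ᶜ else ε' with hdO
  set hf : Vn n → ℝ := fun x => min ε' (min (dU x) (dO x)) with hhf
  set Df : Vn n → ℝ := fun x => Metric.infDist x (Γ ∩ U) with hDf
  set Ef : Vn n → ℝ := fun x => min (Df x) (hf x / 4) with hEf
  set θ : Vn n → ℝ := fun x => if hf x = 0 then 0 else max 0 (min 1 (2 - 8 * Ef x / hf x)) with hθ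
  set g : Vn n → Vn n := fun x => θ x • (ρ x - x) with hg
  set p : Vn n → Vn n := fun x => x + g x with hp
  -- basic bounds
  have hdU0 : ∀ x, 0 ≤ dU x := by
    intro x; rw [hdU]; dsimp only
    split
    · exact Metric.infDist_nonneg
    · exact hε'pos.le
  have hdO0 : ∀ x, 0 ≤ dO x := by
    intro x; rw [hdO]; dsimp only
    split
    · exact Metric.infDist_nonneg
    · exact hε'pos.le
  have hf0 : ∀ x, 0 ≤ hf x := fun x =>
    le_min hε'pos.le (le_min (hdU0 x) (hdO0 x))
  have hfle : ∀ x, hf x ≤ ε' := fun x => min_le_left _ _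
  have hfledU : ∀ x, hf x ≤ dU x := fun x =>
    (min_le_right _ _).trans (min_le_left _ _)
  have hfledO : ∀ x, hf x ≤ dO x := fun x =>
    (min_le_right _ _).trans (min_le_right _ _)
  have hDf0 : ∀ x, 0 ≤ Df x := fun x => Metric.infDist_nonneg
  have hEf0 : ∀ x, 0 ≤ Ef x := fun x => le_min (hDf0 x) (by linarith [hf0 x])
  have hEfle : ∀ x, Ef x ≤ hf x / 4 := fun x => min_le_right _ _
  have hEfleD : ∀ x, Ef x ≤ Df x := fun x => min_le_left _ _
  -- Lipschitz bounds
  have hdUlip : LipschitzWith 1 dU := by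
    rw [hdU]
    by_cases hc : Uᶜ.Nonempty
    · simpa [hc] using Metric.lipschitz_infDist_pt (Uᶜ : Set (Vn n))
    · simpa [hc] using (LipschitzWith.const (α := Vn n) ε').weaken zero_le_one
  have hdOlip : LipschitzWith 1 dO := by
    rw [hdO]
    by_cases hc : O₀ᶜ.Nonempty
    · simpa [hc] using Metric.lipschitz_infDist_pt (O₀ᶜ : Set (Vn n))
    · simpa [hc] using (LipschitzWith.const (α := Vn n) ε').weaken zero_le_one
  have hflip : LipschitzWith 1 hf := by
    rw [hhf]
    simpa using ((LipschitzWith.const (α := Vn n) ε').weaken zero_le_one).min (hdUlip.min hdOlip)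
  have hflipR : ∀ x y, |hf x - hf y| ≤ dist x y := by
    intro x y
    have := hflip.dist_le_mul x y
    rwa [Real.dist_eq, NNReal.coe_one, one_mul] at this
  have hDflip : LipschitzWith 1 Df := Metric.lipschitz_infDist_pt _
  have hDflipR : ∀ x y, |Df x - Df y| ≤ dist x y := by
    intro x y
    have := hDflip.dist_le_mul x y
    rwa [Real.dist_eq, NNReal.coe_one, one_mul] at this
  have hEflipR : ∀ x y, |Ef x - Ef y| ≤ dist x y := by
    intro x y
    rw [hEf]; dsimp only
    refine (abs_min_sub_min_le_max _ _ _ _).trans (max_le (hDflipR x y) ?_)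
    have h1 := hflipR x y
    have h2 : |hf x / 4 - hf y / 4| = |hf x - hf y| / 4 := by
      rw [← sub_div, abs_div]; norm_num
    rw [h2]
    have := dist_nonneg (x := x) (y := y)
    linarith [abs_nonneg (hf x - hf y)]
  -- θ bounds
  have hθ0 : ∀ x, 0 ≤ θ x := by
    intro x; rw [hθ]; dsimp only
    split
    · exact le_rfl
    · exact le_max_left _ _
  have hθ1 : ∀ x, θ x ≤ 1 := by
    intro x; rw [hθ]; dsimp only
    split
    · exact zero_le_one
    · exact max_le zero_le_one (min_le_left _ _)
  -- positivity of hf gives membership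
  have hmemU : ∀ x, 0 < hf x → x ∈ U ∧ x ∈ O₀ := by
    intro x hx
    constructor
    · by_contra hxU
      have hc : (Uᶜ : Set (Vn n)).Nonempty := ⟨x, hxU⟩
      have h0 : dU x = 0 := by
        rw [hdU]; dsimp only; rw [if_pos hc]
        exact Metric.infDist_zero_of_mem hxU
      have := hfledU x
      rw [h0] at this; linarith
    · by_contra hxO
      have hc : (O₀ᶜ : Set (Vn n)).Nonempty := ⟨x, hxO⟩
      have h0 : dO x = 0 := by
        rw [hdO]; dsimp only; rw [if_pos hc]
        exact Metric.infDist_zero_of_mem hxO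
      have := hfledO x
      rw [h0] at this; linarith
  -- distance estimate for the retraction
  have hρdist : ∀ x ∈ O₀, dist (ρ x) x ≤ k * Df x := by
    intro x hx
    by_contra hcon
    push_neg at hcon
    have h1 : Df x < dist (ρ x) x / k := by
      rw [lt_div_iff₀ hk0]; linarith [mul_comm (Df x) k]
    obtain ⟨γ, hγ, hγd⟩ := (Metric.infDist_lt_iff hne).1 h1
    have hγΓ : γ ∈ Γ := hγ.1
    have h2 : dist (ρ x) (ρ γ) ≤ K * dist x γ := hρK.dist_le_mul x hx γ (hΓO₀ hγΓ)
    have h3 : ρ γ = γ := hρid γ hγΓ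
    have h4 : dist (ρ x) x ≤ k * dist x γ := by
      calc dist (ρ x) x ≤ dist (ρ x) (ρ γ) + dist (ρ γ) x := dist_triangle _ _ _
        _ = dist (ρ x) (ρ γ) + dist x γ := by rw [h3, dist_comm γ x]
        _ ≤ K * dist x γ + dist x γ := add_le_add h2 le_rfl
        _ = k * dist x γ := by rw [hkdef]; ring
    have h5 : k * dist x γ < k * (dist (ρ x) x / k) := by
      exact mul_lt_mul_of_pos_left hγd hk0
    rw [mul_div_cancel₀ _ (ne_of_gt hk0)] at h5
    linarith
  -- consequences of θ x > 0
  have hθpos : ∀ x, 0 < θ x → 0 < hf x ∧ Df x < hf x / 4 := by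
    intro x hx
    have hfne : hf x ≠ 0 := by
      intro h0
      rw [hθ] at hx; dsimp only at hx; rw [if_pos h0] at hx
      exact lt_irrefl _ hx
    have hfpos : 0 < hf x := lt_of_le_of_ne (hf0 x) (Ne.symm hfne)
    refine ⟨hfpos, ?_⟩
    have hx' : 0 < max 0 (min 1 (2 - 8 * Ef x / hf x)) := by
      rw [hθ] at hx; dsimp only at hx; rwa [if_neg hfne] at hx
    have ht : 0 < 2 - 8 * Ef x / hf x := by
      rcases lt_max_iff.1 hx' with h | h
      · exact absurd h (lt_irrefl 0)
      · exact (lt_min_iff.1 h).2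
    have hE : Ef x < hf x / 4 := by
      have h6 : 8 * Ef x / hf x < 2 := by linarith
      rw [div_lt_iff₀ hfpos] at h6; linarith
    by_contra hD'
    push_neg at hD'
    have : Ef x = hf x / 4 := min_eq_right hD'
    rw [this] at hE; exact lt_irrefl _ hE
  -- key θ oscillation estimate
  have hθdiff : ∀ x y, 0 < θ x → |θ x - θ y| ≤ 10 * dist x y / hf x := by
    intro x y hx
    obtain ⟨hhx, -⟩ := hθpos x hx
    by_cases hhy : hf y = 0
    · have hθy : θ y = 0 := by rw [hθ]; dsimp only; rw [if_pos hhy]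
      have h1 : hf x ≤ dist x y := by
        have := hflipR x y
        rw [hhy, sub_zero] at this
        exact (le_abs_self _).trans this
      rw [hθy, sub_zero, abs_of_nonneg (hθ0 x)]
      have h2 : (1:ℝ) ≤ 10 * dist x y / hf x := by
        rw [le_div_iff₀ hhx]; nlinarith
      exact (hθ1 x).trans h2
    · have hhy' : 0 < hf y := lt_of_le_of_ne (hf0 y) (Ne.symm hhy)
      have hxne : hf x ≠ 0 := ne_of_gt hhx
      have hθeqx : θ x = max 0 (min 1 (2 - 8 * Ef x / hf x)) := by
        rw [hθ]; dsimp only; rw [if_neg hxne]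
      have hθeqy : θ y = max 0 (min 1 (2 - 8 * Ef y / hf y)) := by
        rw [hθ]; dsimp only; rw [if_neg hhy]
      set tx := 8 * Ef x / hf x with htx
      set ty := 8 * Ef y / hf y with hty
      have step1 : |θ x - θ y| ≤ |tx - ty| := by
        rw [hθeqx, hθeqy, max_comm 0 (min 1 (2 - tx)), max_comm 0 (min 1 (2 - ty))]
        refine (abs_max_sub_max_le_abs _ _ 0).trans ?_
        refine (abs_min_sub_min_le_max 1 (2 - tx) 1 (2 - ty)).trans ?_
        simp only [sub_self, abs_zero]
        rw [max_eq_right (abs_nonneg _), show (2 - tx) - (2 - ty) = -(tx - ty) by ring, abs_neg]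
      have step2 : |tx - ty| ≤ 10 * dist x y / hf x := by
        have hE4 : Ef y ≤ hf y / 4 := hEfle y
        have hElip := hEflipR x y
        have hhlip := hflipR x y
        have key : tx - ty = 8 * ((Ef x - Ef y) / hf x + Ef y / hf y * ((hf y - hf x) / hf x)) := by
          rw [htx, hty]; field_simp; ring
        rw [key]
        have hb : |Ef y / hf y| ≤ 1 / 4 := by
          rw [abs_of_nonneg (div_nonneg (hEf0 y) (hf0 y))]
          rw [div_le_iff₀ hhy']; linarith
        have ha : |(Ef x - Ef y) / hf x| ≤ dist x y / hf x := by
          rw [abs_div, abs_of_pos hhx]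
          gcongr
        have hcc : |(hf y - hf x) / hf x| ≤ dist x y / hf x := by
          rw [abs_div, abs_of_pos hhx]
          gcongr
          rw [abs_sub_comm]; exact hhlip
        have habs : |(Ef x - Ef y) / hf x + Ef y / hf y * ((hf y - hf x) / hf x)|
            ≤ dist x y / hf x + 1 / 4 * (dist x y / hf x) := by
          refine (abs_add_le _ _).trans (add_le_add ha ?_)
          rw [abs_mul]
          have h7 := mul_le_mul hb hcc (abs_nonneg _) (by norm_num)
          linarith
        rw [abs_mul, abs_of_nonneg (by norm_num : (0:ℝ) ≤ 8)]
        calc 8 * |(Ef x - Ef y) / hf x + Ef y / hf y * ((hf y - hf x) / hf x)|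
            ≤ 8 * (dist x y / hf x + 1 / 4 * (dist x y / hf x)) := by
              exact mul_le_mul_of_nonneg_left habs (by norm_num)
          _ = 10 * dist x y / hf x := by ring
      linarith
  -- main Lipschitz estimate for g
  have hgkey : ∀ x y, θ y ≤ θ x → ‖g x - g y‖ ≤ 7 / 2 * k * dist x y := by
    intro x y hxy
    rcases eq_or_lt_of_le (hθ0 x) with h0 | hθx
    · have hx0 : θ x = 0 := h0.symm
      have hy0 : θ y = 0 := le_antisymm (hx0 ▸ hxy) (hθ0 y)
      rw [hg]; dsimp only
      rw [hx0, hy0]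
      simp only [zero_smul, sub_zero, norm_zero]
      positivity
    · obtain ⟨hhx, hDx⟩ := hθpos x hθx
      have hxUO := hmemU x hhx
      have hρx := hρdist x hxUO.2
      have hid : g x - g y = (θ x - θ y) • (ρ x - x) + θ y • ((ρ x - x) - (ρ y - y)) := by
        rw [hg]
        simp only [sub_smul, smul_sub]
        abel
      rw [hid]
      have hb1 : ‖(θ x - θ y) • (ρ x - x)‖ ≤ 5 / 2 * k * dist x y := by
        rw [norm_smul, Real.norm_eq_abs]
        have h1 : |θ x - θ y| ≤ 10 * dist x y / hf x := hθdiff x y hθx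
        have h2 : ‖ρ x - x‖ ≤ k * (hf x / 4) := by
          rw [← dist_eq_norm]
          refine hρx.trans ?_
          nlinarith
        calc |θ x - θ y| * ‖ρ x - x‖
            ≤ 10 * dist x y / hf x * (k * (hf x / 4)) :=
              mul_le_mul h1 h2 (norm_nonneg _) (by positivity)
          _ = 5 / 2 * k * dist x y := by field_simp; ring
      have hb2 : ‖θ y • ((ρ x - x) - (ρ y - y))‖ ≤ k * dist x y := by
        rcases eq_or_lt_of_le (hθ0 y) with hy0 | hθy
        · rw [← hy0]
          simp only [zero_smul, norm_zero]
          positivity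
        · obtain ⟨hhy, -⟩ := hθpos y hθy
          have hyO := (hmemU y hhy).2
          rw [norm_smul, Real.norm_eq_abs, abs_of_nonneg (hθ0 y)]
          have h4 : dist (ρ x) (ρ y) ≤ K * dist x y := hρK.dist_le_mul x hxUO.2 y hyO
          have h3 : ‖(ρ x - x) - (ρ y - y)‖ ≤ k * dist x y := by
            calc ‖(ρ x - x) - (ρ y - y)‖ = ‖(ρ x - ρ y) + -(x - y)‖ := by
                  congr 1; abel
              _ ≤ ‖ρ x - ρ y‖ + ‖-(x - y)‖ := norm_add_le _ _
              _ = dist (ρ x) (ρ y) + dist x y := by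
                  rw [norm_neg, dist_eq_norm, dist_eq_norm]
              _ ≤ K * dist x y + dist x y := add_le_add h4 le_rfl
              _ = k * dist x y := by rw [hkdef]; ring
          calc θ y * ‖(ρ x - x) - (ρ y - y)‖ ≤ 1 * (k * dist x y) :=
                mul_le_mul (hθ1 y) h3 (norm_nonneg _) zero_le_one
            _ = k * dist x y := one_mul _
      calc ‖(θ x - θ y) • (ρ x - x) + θ y • ((ρ x - x) - (ρ y - y))‖
          ≤ ‖(θ x - θ y) • (ρ x - x)‖ + ‖θ y • ((ρ x - x) - (ρ y - y))‖ := norm_add_le _ _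
        _ ≤ 5 / 2 * k * dist x y + k * dist x y := add_le_add hb1 hb2
        _ = 7 / 2 * k * dist x y := by ring
  -- p is Lipschitz
  have hplip : LipschitzWith (4 * K + 5) p := by
    apply LipschitzWith.of_dist_le_mul
    intro x y
    have hgb : ‖g x - g y‖ ≤ 7 / 2 * k * dist x y := by
      rcases le_total (θ y) (θ x) with h | h
      · exact hgkey x y h
      · rw [norm_sub_rev, dist_comm x y]
        exact hgkey y x h
    have hd : dist (p x) (p y) ≤ dist x y + ‖g x - g y‖ := by
      rw [hp]; dsimp only
      rw [dist_eq_norm]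
      calc ‖x + g x - (y + g y)‖ = ‖(x - y) + (g x - g y)‖ := by congr 1; abel
        _ ≤ ‖x - y‖ + ‖g x - g y‖ := norm_add_le _ _
        _ = dist x y + ‖g x - g y‖ := by rw [dist_eq_norm]
    have hC : ((4 * K + 5 : ℝ≥0) : ℝ) = 4 * (K : ℝ) + 5 := by push_cast; ring
    rw [hC]
    have hdn := dist_nonneg (x := x) (y := y)
    nlinarith
  -- the open set O
  set O : Set (Vn n) := {x | 8 * Df x < hf x} with hO
  have hOopen : IsOpen O := by
    rw [hO]
    exact isOpen_lt (continuous_const.mul hDflip.continuous) hflip.continuous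
  have hOpos : ∀ x ∈ O, 0 < hf x := by
    intro x hx
    rw [hO] at hx
    have := hDf0 x
    simp only [Set.mem_setOf_eq] at hx
    linarith
  have hΓUO : Γ ∩ U ⊆ O := by
    intro x hx
    have hD0 : Df x = 0 := Metric.infDist_zero_of_mem hx
    have hdUp : 0 < dU x := by
      rw [hdU]; dsimp only
      split
      · rename_i hc
        refine (IsClosed.notMem_iff_infDist_pos hUo.isClosed_compl hc).1 ?_
        simp only [Set.mem_compl_iff, not_not]
        exact hx.2
      · exact hε'pos
    have hdOp : 0 < dO x := by
      rw [hdO]; dsimp only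
      split
      · rename_i hc
        refine (IsClosed.notMem_iff_infDist_pos hO₀o.isClosed_compl hc).1 ?_
        simp only [Set.mem_compl_iff, not_not]
        exact hΓO₀ hx.1
      · exact hε'pos
    have : 0 < hf x := lt_min hε'pos (lt_min hdUp hdOp)
    rw [hO]
    simp only [Set.mem_setOf_eq, hD0, mul_zero]
    exact this
  have hOU : O ⊆ U := fun x hx => (hmemU x (hOpos x hx)).1
  have hθO : ∀ x ∈ O, θ x = 1 := by
    intro x hx
    have hpos := hOpos x hx
    have h8 : 8 * Ef x < hf x := by
      rw [hO] at hx
      simp only [Set.mem_setOf_eq] at hx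
      have := hEfleD x
      linarith
    have ht1 : 8 * Ef x / hf x < 1 := by
      rw [div_lt_one hpos]; linarith
    rw [hθ]; dsimp only
    rw [if_neg (ne_of_gt hpos), min_eq_left (by linarith), max_eq_right zero_le_one]
  have himg : p '' O ⊆ Γ := by
    rintro - ⟨x, hx, rfl⟩
    have : p x = ρ x := by
      rw [hp, hg]; dsimp only
      rw [hθO x hx, one_smul]; abel
    rw [this]
    exact hρim (Set.mem_image_of_mem ρ (hmemU x (hOpos x hx)).2)
  have hdistp : ∀ x, dist (p x) x ≤ ε := by
    intro x
    have hdg : dist (p x) x = ‖g x‖ := by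
      rw [hp]; dsimp only
      rw [dist_eq_norm]; congr 1; abel
    rw [hdg]
    rcases eq_or_lt_of_le (hθ0 x) with h0 | hθx
    · rw [hg]; dsimp only
      rw [← h0, zero_smul, norm_zero]
      exact hε.le
    · obtain ⟨hhx, hDx⟩ := hθpos x hθx
      have hxO := (hmemU x hhx).2
      have h1 : ‖ρ x - x‖ ≤ k * Df x := by
        rw [← dist_eq_norm]; exact hρdist x hxO
      have h2 : ‖g x‖ ≤ ‖ρ x - x‖ := by
        rw [hg]; dsimp only
        rw [norm_smul, Real.norm_eq_abs, abs_of_nonneg (hθ0 x)]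
        nlinarith [norm_nonneg (ρ x - x), hθ1 x]
      have h3 : hf x ≤ ε' := hfle x
      nlinarith
  have hfix : ∀ x ∈ Γ ∪ Uᶜ, p x = x := by
    intro x hx
    rcases hx with hxΓ | hxU
    · rw [hp, hg]; dsimp only
      rw [hρid x hxΓ]
      simp
    · have hc : (Uᶜ : Set (Vn n)).Nonempty := ⟨x, hxU⟩
      have h0 : dU x = 0 := by
        rw [hdU]; dsimp only; rw [if_pos hc]
        exact Metric.infDist_zero_of_mem hxU
      have hf00 : hf x = 0 := le_antisymm (h0 ▸ hfledU x) (hf0 x)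
      rw [hp, hg]; dsimp only
      rw [hθ]; dsimp only
      rw [if_pos hf00]
      simp
  exact ⟨p, O, hplip, hOopen, hΓUO, hOU, hdistp, himg, hfix⟩
end Paper
end
end

section
/- Local structure of the Grassmannian. Let 0 ≤ d ≤ n and V, W ∈ G(d,n). Then: (i) d(V,W) ≤ 1, with equality if and only if V ∩ W^⊥ ≠ {0} or V^⊥ ∩ W ≠ {0}; (ii) if d(V,W) < 1 then for every x ∈ W, |x| ≤ (1 − d(V,W)²)^{-1/2} |p_V(x)|; hence p_V restricted to W is a linear isomorphism p_* : W → V, and W = {x + φ(x) : x ∈ V} where φ : V → V^⊥ is the linear map x ↦ p_*^{-1}(x) − x; (iii) if W = {x + φ(x) : x ∈ V} for some linear map φ : V → V^⊥, then d(V,W) = ‖φ‖ / √(1 + ‖φ‖²), where ‖φ‖ is the operator norm of φ. -/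
open MeasureTheory Metric Set Filter
open scoped ENNReal NNReal Topology BigOperators

noncomputable section

namespace Paper

section GrassAux

variable {n : ℕ}

lemma projL_apply' (V : Submodule ℝ (Vn n)) (x : Vn n) :
    projL V x = (Submodule.orthogonalProjectionOnto V x : Vn n) := rfl

lemma projL_mem (V : Submodule ℝ (Vn n)) (x : Vn n) : projL V x ∈ V :=
  (Submodule.orthogonalProjectionOnto V x).2

lemma projL_eq_self {V : Submodule ℝ (Vn n)} {x : Vn n} (hx : x ∈ V) : projL V x = x :=
  Submodule.starProjection_eq_self_iff.2 hx

lemma projL_eq_zero {V : Submodule ℝ (Vn n)} {x : Vn n} (hx : x ∈ Vᗮ) : projL V x = 0 := by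
  rw [projL_apply', Submodule.orthogonalProjectionOnto_apply_of_mem_orthogonal hx,
    Submodule.coe_zero]

lemma sub_projL_mem (V : Submodule ℝ (Vn n)) (x : Vn n) : x - projL V x ∈ Vᗮ :=
  V.sub_starProjection_mem_orthogonal x

lemma mem_orthogonal_of_projL_eq_zero {V : Submodule ℝ (Vn n)} {z : Vn n}
    (h : projL V z = 0) : z ∈ Vᗮ := by
  have h2 := sub_projL_mem V z
  rwa [h, sub_zero] at h2

lemma pyth {V : Submodule ℝ (Vn n)} {a b : Vn n} (ha : a ∈ V) (hb : b ∈ Vᗮ) :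
    ‖a + b‖ ^ 2 = ‖a‖ ^ 2 + ‖b‖ ^ 2 := by
  have h : (inner ℝ a b : ℝ) = 0 := Submodule.inner_right_of_mem_orthogonal ha hb
  rw [norm_add_sq_real, h]; ring

lemma norm_sq_split (V : Submodule ℝ (Vn n)) (x : Vn n) :
    ‖x‖ ^ 2 = ‖projL V x‖ ^ 2 + ‖x - projL V x‖ ^ 2 := by
  have h := pyth (projL_mem V x) (sub_projL_mem V x)
  have h2 : projL V x + (x - projL V x) = x := by abel
  rwa [h2] at h

lemma le_of_sq_le_sq {a b : ℝ} (ha : 0 ≤ a) (hb : 0 ≤ b) (h : a ^ 2 ≤ b ^ 2) : a ≤ b := by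
  nlinarith

lemma norm_projL_le (V : Submodule ℝ (Vn n)) (z : Vn n) : ‖projL V z‖ ≤ ‖z‖ := by
  have h := norm_sq_split V z
  exact le_of_sq_le_sq (norm_nonneg _) (norm_nonneg _) (by nlinarith [sq_nonneg ‖z - projL V z‖])

lemma norm_sub_projL_le (V : Submodule ℝ (Vn n)) (z : Vn n) : ‖z - projL V z‖ ≤ ‖z‖ := by
  have h := norm_sq_split V z
  exact le_of_sq_le_sq (norm_nonneg _) (norm_nonneg _) (by nlinarith [sq_nonneg ‖projL V z‖])

lemma exists_norm_apply_eq {E F : Type*} [NormedAddCommGroup E] [NormedSpace ℝ E]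
    [FiniteDimensional ℝ E] [NormedAddCommGroup F] [NormedSpace ℝ F]
    (T : E →L[ℝ] F) : ∃ x : E, ‖x‖ ≤ 1 ∧ ‖T x‖ = ‖T‖ := by
  obtain ⟨x, hx, hmax⟩ := (isCompact_closedBall (0 : E) 1).exists_isMaxOn
    ⟨0, mem_closedBall_self zero_le_one⟩
    ((continuous_norm.comp T.continuous).continuousOn)
  have hx1 : ‖x‖ ≤ 1 := by simpa [mem_closedBall_zero_iff] using hx
  refine ⟨x, hx1, le_antisymm ?_ ?_⟩
  · have h := T.le_opNorm x
    nlinarith [norm_nonneg (T x), ContinuousLinearMap.opNorm_nonneg T]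
  · refine T.opNorm_le_bound (norm_nonneg _) (fun y => ?_)
    rcases eq_or_ne y 0 with rfl | hy
    · simp
    · have hny : (0:ℝ) < ‖y‖ := norm_pos_iff.2 hy
      have hz : ‖y‖⁻¹ • y ∈ closedBall (0 : E) 1 := by
        rw [mem_closedBall_zero_iff, norm_smul, norm_inv, norm_norm,
          inv_mul_cancel₀ hny.ne']
      have h2 : ‖T (‖y‖⁻¹ • y)‖ ≤ ‖T x‖ := hmax hz
      rw [T.map_smul, norm_smul, norm_inv, norm_norm] at h2
      calc ‖T y‖ = ‖y‖ * (‖y‖⁻¹ * ‖T y‖) := by field_simp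
        _ ≤ ‖y‖ * ‖T x‖ := mul_le_mul_of_nonneg_left h2 hny.le
        _ = ‖T x‖ * ‖y‖ := mul_comm _ _

lemma projL_diff_apply (V W : Submodule ℝ (Vn n)) (y : Vn n) :
    (projL V - projL W) y
      = projL V (y - projL W y) - (projL W y - projL V (projL W y)) := by
  simp only [ContinuousLinearMap.sub_apply, map_sub]
  abel

lemma norm_diff_apply_sq (V W : Submodule ℝ (Vn n)) (y : Vn n) :
    ‖(projL V - projL W) y‖ ^ 2
      = ‖projL V (y - projL W y)‖ ^ 2 + ‖projL W y - projL V (projL W y)‖ ^ 2 := by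
  rw [projL_diff_apply]
  have hb : -(projL W y - projL V (projL W y)) ∈ Vᗮ :=
    neg_mem (sub_projL_mem V (projL W y))
  have h := pyth (projL_mem V (y - projL W y)) hb
  rw [← sub_eq_add_neg, norm_neg] at h
  exact h

lemma norm_diff_apply_le (V W : Submodule ℝ (Vn n)) (y : Vn n) :
    ‖(projL V - projL W) y‖ ≤ ‖y‖ := by
  refine le_of_sq_le_sq (norm_nonneg _) (norm_nonneg _) ?_
  rw [norm_diff_apply_sq]
  have h1 : ‖projL V (y - projL W y)‖ ≤ ‖y - projL W y‖ := norm_projL_le V _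
  have h2 : ‖projL W y - projL V (projL W y)‖ ≤ ‖projL W y‖ := by
    have := norm_sub_projL_le V (projL W y)
    simpa using this
  have h3 := norm_sq_split W y
  nlinarith [norm_nonneg (projL V (y - projL W y)),
    norm_nonneg (projL W y - projL V (projL W y)),
    norm_nonneg (y - projL W y), norm_nonneg (projL W y)]

lemma norm_projL_sub_le_one (V W : Submodule ℝ (Vn n)) : ‖projL V - projL W‖ ≤ 1 := by
  refine ContinuousLinearMap.opNorm_le_bound _ zero_le_one (fun y => ?_)
  rw [one_mul]
  exact norm_diff_apply_le V W y

lemma dist_projL_le {W : Submodule ℝ (Vn n)} (v : Vn n) {w : Vn n} (hw : w ∈ W) :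
    ‖v - projL W v‖ ≤ ‖v - w‖ := by
  have ha : projL W v - w ∈ W := W.sub_mem (projL_mem W v) hw
  have h := pyth ha (sub_projL_mem W v)
  have h2 : projL W v - w + (v - projL W v) = v - w := by abel
  rw [h2] at h
  refine le_of_sq_le_sq (norm_nonneg _) (norm_nonneg _) ?_
  nlinarith [sq_nonneg ‖projL W v - w‖]

end GrassAux

set_option maxHeartbeats 4000000 in
/-- **Local structure of the Grassmannian.** -/
theorem grassmannian_local_structure (n d : ℕ) (hdn : d ≤ n)
    (V W : Submodule ℝ (Vn n))
    (hV : Module.finrank ℝ V = d) (hW : Module.finrank ℝ W = d) :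
    (‖projL V - projL W‖ ≤ 1 ∧
      (‖projL V - projL W‖ = 1 ↔ V ⊓ Wᗮ ≠ ⊥ ∨ Vᗮ ⊓ W ≠ ⊥)) ∧
    (‖projL V - projL W‖ < 1 →
      (∀ x ∈ W, ‖x‖ ≤ (Real.sqrt (1 - ‖projL V - projL W‖ ^ 2))⁻¹ * ‖projL V x‖) ∧
      Function.Bijective (fun x : W => Submodule.orthogonalProjectionOnto V (x : Vn n)) ∧
      ∃ φ : V →L[ℝ] Vᗮ,
        (W : Set (Vn n)) = {y | ∃ x : V, y = (x : Vn n) + (φ x : Vn n)}) ∧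
    (∀ φ : V →L[ℝ] Vᗮ,
      (W : Set (Vn n)) = {y | ∃ x : V, y = (x : Vn n) + (φ x : Vn n)} →
      ‖projL V - projL W‖ = ‖φ‖ / Real.sqrt (1 + ‖φ‖ ^ 2)) := by
  refine ⟨⟨norm_projL_sub_le_one V W, ?_, ?_⟩, ?_, ?_⟩
  · -- norm = 1 → intersection nontrivial
    intro h1
    by_contra hcon
    push_neg at hcon
    obtain ⟨hVW, hVW'⟩ := hcon
    obtain ⟨x, hx1, hx2⟩ := exists_norm_apply_eq (projL V - projL W)
    rw [h1] at hx2
    have hxn : ‖x‖ = 1 := le_antisymm hx1 (by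
      have := norm_diff_apply_le V W x; linarith)
    have e0 := norm_diff_apply_sq V W x
    have a1 : ‖projL V (x - projL W x)‖ ≤ ‖x - projL W x‖ := norm_projL_le V _
    have a2 : ‖projL W x - projL V (projL W x)‖ ≤ ‖projL W x‖ := by
      have h := norm_sub_projL_le V (projL W x)
      exact h
    have a3 := norm_sq_split W x
    have b1 : ‖projL V (x - projL W x)‖ = ‖x - projL W x‖ := by
      nlinarith [norm_nonneg (projL V (x - projL W x)), norm_nonneg (x - projL W x),
        norm_nonneg (projL W x - projL V (projL W x)), norm_nonneg (projL W x)]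
    have b2 : ‖projL W x - projL V (projL W x)‖ = ‖projL W x‖ := by
      nlinarith [norm_nonneg (projL V (x - projL W x)), norm_nonneg (x - projL W x),
        norm_nonneg (projL W x - projL V (projL W x)), norm_nonneg (projL W x)]
    -- first: x - Qx ∈ V
    have c1 : ‖x - projL W x - projL V (x - projL W x)‖ = 0 := by
      have h := norm_sq_split V (x - projL W x)
      have b1' : ‖projL V (x - projL W x)‖^2 = ‖x - projL W x‖^2 := by rw [b1]
      have h9 : ‖x - projL W x - projL V (x - projL W x)‖^2 = 0 := by linarith
      exact pow_eq_zero_iff (two_ne_zero) |>.1 h9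
    have c2 : x - projL W x = projL V (x - projL W x) :=
      sub_eq_zero.1 (norm_eq_zero.1 c1)
    have hxv : x - projL W x ∈ V := c2 ▸ projL_mem V (x - projL W x)
    have hxw : x - projL W x ∈ Wᗮ := sub_projL_mem W x
    have hz1 : x - projL W x = 0 := by
      have hmem : x - projL W x ∈ V ⊓ Wᗮ := Submodule.mem_inf.2 ⟨hxv, hxw⟩
      rw [hVW] at hmem
      exact hmem
    -- second: Qx ∈ Vᗮ
    have d1 : ‖projL V (projL W x)‖ = 0 := by
      have h := norm_sq_split V (projL W x)
      have b2' : ‖projL W x - projL V (projL W x)‖^2 = ‖projL W x‖^2 := by rw [b2]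
      have h9 : ‖projL V (projL W x)‖^2 = 0 := by linarith
      exact pow_eq_zero_iff (two_ne_zero) |>.1 h9
    have d2 : projL W x ∈ Vᗮ := mem_orthogonal_of_projL_eq_zero (norm_eq_zero.1 d1)
    have hz2 : projL W x = 0 := by
      have hmem : projL W x ∈ Vᗮ ⊓ W := Submodule.mem_inf.2 ⟨d2, projL_mem W x⟩
      rw [hVW'] at hmem
      exact hmem
    have : x = 0 := by
      rw [sub_eq_zero] at hz1
      rw [hz1, hz2]
    rw [this, norm_zero] at hxn
    exact zero_ne_one hxn
  · -- intersection nontrivial → norm = 1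
    rintro (h | h)
    · obtain ⟨x, hx, hx0⟩ := (Submodule.ne_bot_iff _).1 h
      rw [Submodule.mem_inf] at hx
      have hPx : (projL V - projL W) x = x := by
        rw [ContinuousLinearMap.sub_apply, projL_eq_self hx.1, projL_eq_zero hx.2, sub_zero]
      refine le_antisymm (norm_projL_sub_le_one V W) ?_
      have hr := (projL V - projL W).ratio_le_opNorm x
      rwa [hPx, div_self (norm_ne_zero_iff.2 hx0)] at hr
    · obtain ⟨x, hx, hx0⟩ := (Submodule.ne_bot_iff _).1 h
      rw [Submodule.mem_inf] at hx
      have hPx : (projL V - projL W) x = -x := by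
        rw [ContinuousLinearMap.sub_apply, projL_eq_self hx.2, projL_eq_zero hx.1, zero_sub]
      refine le_antisymm (norm_projL_sub_le_one V W) ?_
      have hr := (projL V - projL W).ratio_le_opNorm x
      rwa [hPx, norm_neg, div_self (norm_ne_zero_iff.2 hx0)] at hr
  · -- part B
    intro hlt
    have hδ0 : 0 ≤ ‖projL V - projL W‖ := norm_nonneg _
    have hc2 : (0:ℝ) < 1 - ‖projL V - projL W‖^2 := by nlinarith
    have hcpos : 0 < Real.sqrt (1 - ‖projL V - projL W‖^2) := Real.sqrt_pos.2 hc2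
    have hcsq : Real.sqrt (1 - ‖projL V - projL W‖^2)^2 = 1 - ‖projL V - projL W‖^2 :=
      Real.sq_sqrt hc2.le
    have key : ∀ x ∈ W, ‖x‖ ≤ (Real.sqrt (1 - ‖projL V - projL W‖^2))⁻¹ * ‖projL V x‖ := by
      intro x hx
      have h1 : ‖projL V x - x‖ ≤ ‖projL V - projL W‖ * ‖x‖ := by
        have h2 := (projL V - projL W).le_opNorm x
        rwa [ContinuousLinearMap.sub_apply, projL_eq_self hx] at h2
      have h3 := norm_sq_split V x
      have h4 : ‖x - projL V x‖ = ‖projL V x - x‖ := norm_sub_rev _ _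
      rw [inv_mul_eq_div, le_div_iff₀ hcpos]
      refine le_of_sq_le_sq (by positivity) (norm_nonneg _) ?_
      have h5 : ‖projL V x - x‖^2 ≤ ‖projL V - projL W‖^2 * ‖x‖^2 := by
        nlinarith [norm_nonneg (projL V x - x), norm_nonneg x,
          mul_nonneg hδ0 (norm_nonneg x)]
      rw [mul_pow, hcsq]
      have h4' : ‖x - projL V x‖^2 = ‖projL V x - x‖^2 := by rw [h4]
      nlinarith [norm_nonneg x]
    refine ⟨key, ?_⟩
    have hWV : Module.finrank ℝ W = Module.finrank ℝ V := by rw [hW, hV]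
    set flin : W →ₗ[ℝ] V := (Submodule.orthogonalProjectionOnto V).toLinearMap.comp W.subtype with hflin
    have hinj : Function.Injective flin := by
      rw [← LinearMap.ker_eq_bot, Submodule.eq_bot_iff]
      intro w hw
      rw [LinearMap.mem_ker] at hw
      have h0 : projL V (w : Vn n) = 0 := by
        have h1 : Submodule.orthogonalProjectionOnto V ((w : W) : Vn n) = 0 := hw
        rw [projL_apply', h1, Submodule.coe_zero]
      have h2 := key (w : Vn n) w.2
      rw [h0, norm_zero, mul_zero] at h2
      exact Submodule.coe_eq_zero.1 (norm_eq_zero.1 (le_antisymm h2 (norm_nonneg _)))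
    have hsurj : Function.Surjective flin :=
      (LinearMap.injective_iff_surjective_of_finrank_eq_finrank hWV).1 hinj
    refine ⟨⟨hinj, hsurj⟩, ?_⟩
    set e : W ≃ₗ[ℝ] V := LinearEquiv.ofBijective flin ⟨hinj, hsurj⟩ with he
    have hker : ∀ x : V, ((e.symm x : W) : Vn n) - (x : Vn n) ∈ Vᗮ := by
      intro x
      apply mem_orthogonal_of_projL_eq_zero
      rw [map_sub]
      have h2 : e (e.symm x) = x := e.apply_symm_apply x
      have h3 : Submodule.orthogonalProjectionOnto V ((e.symm x : W) : Vn n) = x := h2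
      rw [projL_apply', h3, projL_eq_self x.2, sub_self]
    set ψ : V →ₗ[ℝ] Vn n := W.subtype.comp e.symm.toLinearMap - V.subtype with hψdef
    have hψ : ∀ x : V, ψ x ∈ Vᗮ := fun x => hker x
    refine ⟨LinearMap.toContinuousLinearMap (ψ.codRestrict Vᗮ hψ), ?_⟩
    ext y
    simp only [Set.mem_setOf_eq, SetLike.mem_coe]
    constructor
    · intro hy
      refine ⟨e ⟨y, hy⟩, ?_⟩
      have h1 : ((LinearMap.toContinuousLinearMap (ψ.codRestrict Vᗮ hψ) (e ⟨y, hy⟩) : Vᗮ) : Vn n)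
          = ((e.symm (e ⟨y, hy⟩) : W) : Vn n) - ((e ⟨y, hy⟩ : V) : Vn n) := rfl
      rw [h1, e.symm_apply_apply]
      simp
    · rintro ⟨x, rfl⟩
      have h1 : ((LinearMap.toContinuousLinearMap (ψ.codRestrict Vᗮ hψ) x : Vᗮ) : Vn n)
          = ((e.symm x : W) : Vn n) - (x : Vn n) := rfl
      rw [h1]
      have h2 : (x : Vn n) + (((e.symm x : W) : Vn n) - (x : Vn n))
          = ((e.symm x : W) : Vn n) := by abel
      rw [h2]
      exact (e.symm x).2
  · -- part C
    intro φ hgraph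
    have ht0 : (0:ℝ) ≤ ‖φ‖ := ContinuousLinearMap.opNorm_nonneg φ
    set t := ‖φ‖ with ht
    set s := Real.sqrt (1 + t^2) with hs
    have hs2 : s^2 = 1 + t^2 := Real.sq_sqrt (by positivity)
    have hspos : 0 < s := Real.sqrt_pos.2 (by positivity)
    have hmemW : ∀ y : Vn n, y ∈ W ↔ ∃ x : V, y = (x : Vn n) + ((φ x : Vᗮ) : Vn n) := by
      intro y
      rw [← SetLike.mem_coe, hgraph]
      exact Iff.rfl
    have hPw : ∀ x : V, projL V ((x : Vn n) + ((φ x : Vᗮ) : Vn n)) = (x : Vn n) := by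
      intro x
      rw [map_add, projL_eq_self x.2, projL_eq_zero (φ x).2, add_zero]
    have hopn : ∀ x : V, ‖((φ x : Vᗮ) : Vn n)‖ ≤ t * ‖(x : Vn n)‖ := by
      intro x
      rw [← Submodule.coe_norm, ← Submodule.coe_norm]
      exact φ.le_opNorm x
    have hC1 : ∀ w ∈ W, ‖w - projL V w‖^2 * (1 + t^2) ≤ t^2 * ‖w‖^2 := by
      intro w hw
      obtain ⟨x, rfl⟩ := (hmemW w).1 hw
      rw [hPw x]
      have h1 : ((x : Vn n) + ((φ x : Vᗮ) : Vn n)) - (x : Vn n) = ((φ x : Vᗮ) : Vn n) := by abel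
      rw [h1]
      have h2 := hopn x
      have h3 := pyth x.2 (φ x).2
      nlinarith [norm_nonneg ((φ x : Vᗮ) : Vn n), norm_nonneg ((x : V) : Vn n),
        mul_nonneg ht0 (norm_nonneg ((x : V) : Vn n))]
    have hC2 : ∀ v : Vn n, v ∈ V → ‖v - projL W v‖^2 * (1 + t^2) ≤ t^2 * ‖v‖^2 := by
      intro v hv
      rcases eq_or_ne v 0 with rfl | hv0
      · simp
      set x : V := (⟨v, hv⟩ : V) with hx
      have ha0 : 0 < ‖v‖ := norm_pos_iff.2 hv0
      have hcta : ‖((φ x : Vᗮ) : Vn n)‖ ≤ t * ‖v‖ := hopn x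
      have hc0 : (0:ℝ) ≤ ‖((φ x : Vᗮ) : Vn n)‖ := norm_nonneg _
      set cc := ‖((φ x : Vᗮ) : Vn n)‖ with hccd
      set a := ‖v‖ with had
      have hDpos : (0:ℝ) < a^2 + cc^2 := by positivity
      set lam := a^2 / (a^2 + cc^2) with hlam
      have hww : (((lam • x : V) : Vn n) + ((φ (lam • x) : Vᗮ) : Vn n)) ∈ W :=
        (hmemW _).2 ⟨lam • x, rfl⟩
      have hdist := dist_projL_le (W := W) v hww
      have hsplit : v - ((((lam • x : V) : Vn n)) + ((φ (lam • x) : Vᗮ) : Vn n))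
          = (1 - lam) • v + (-lam) • ((φ x : Vᗮ) : Vn n) := by
        rw [_root_.map_smul]
        rw [Submodule.coe_smul, Submodule.coe_smul]
        show v - (lam • v + lam • _) = _
        rw [sub_smul, one_smul, neg_smul]
        abel
      have hnorm : ‖v - ((((lam • x : V) : Vn n)) + ((φ (lam • x) : Vᗮ) : Vn n))‖^2
          = (1 - lam)^2 * a^2 + lam^2 * cc^2 := by
        rw [hsplit, pyth (V.smul_mem (1 - lam) hv) (Vᗮ.smul_mem (-lam) (φ x).2)]
        rw [norm_smul, norm_smul, Real.norm_eq_abs, Real.norm_eq_abs,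
          mul_pow, mul_pow, sq_abs, sq_abs, neg_sq]
      have hfrac : 1 - lam = cc^2 / (a^2 + cc^2) := by
        rw [hlam]
        field_simp
        ring
      have h5 : cc^2 ≤ t^2 * a^2 := by nlinarith [mul_self_le_mul_self hc0 hcta]
      have hkey : ((cc^2/(a^2+cc^2))^2 * a^2 + (a^2/(a^2+cc^2))^2 * cc^2) * (1 + t^2)
          ≤ t^2 * a^2 := by
        rw [div_pow, div_pow]
        have e1 : (cc^2)^2/(a^2+cc^2)^2 * a^2 + (a^2)^2/(a^2+cc^2)^2 * cc^2
            = (a^2 * cc^2) / (a^2+cc^2) := by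
          field_simp
          ring
        rw [e1, div_mul_eq_mul_div, div_le_iff₀ hDpos]
        nlinarith [mul_nonneg (sq_nonneg a) (sub_nonneg.2 h5), sq_nonneg a, sq_nonneg cc]
      have hd2 : ‖v - projL W v‖^2 ≤ (1 - lam)^2 * a^2 + lam^2 * cc^2 := by
        rw [← hnorm]
        nlinarith [hdist, norm_nonneg (v - projL W v)]
      rw [hfrac, hlam] at hd2
      nlinarith [mul_le_mul_of_nonneg_right hd2 (by positivity : (0:ℝ) ≤ 1 + t^2), hkey]
    have hC3 : ∀ u : Vn n, u ∈ Wᗮ → ‖projL V u‖^2 * (1 + t^2) ≤ t^2 * ‖u‖^2 := by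
      intro u hu
      have hvV : projL V u ∈ V := projL_mem V u
      have hiv : ‖projL V u‖^2 = (inner ℝ u (projL V u) : ℝ) := by
        have h1 : (inner ℝ (projL V u) (u - projL V u) : ℝ) = 0 :=
          Submodule.inner_right_of_mem_orthogonal hvV (sub_projL_mem V u)
        rw [inner_sub_right] at h1
        rw [real_inner_comm, ← real_inner_self_eq_norm_sq]
        linarith [h1]
      have hiw : (inner ℝ u (projL W (projL V u)) : ℝ) = 0 := by
        have := Submodule.inner_right_of_mem_orthogonal (projL_mem W (projL V u)) hu
        rw [real_inner_comm] at this
        exact this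
      have hcs : ‖projL V u‖^2 ≤ ‖u‖ * ‖projL V u - projL W (projL V u)‖ := by
        have h2 : (inner ℝ u (projL V u - projL W (projL V u)) : ℝ)
            = (inner ℝ u (projL V u) : ℝ) := by
          rw [inner_sub_right, hiw]
          ring
        calc ‖projL V u‖^2 = (inner ℝ u (projL V u - projL W (projL V u)) : ℝ) := by
              rw [h2, ← hiv]
          _ ≤ ‖u‖ * ‖projL V u - projL W (projL V u)‖ := real_inner_le_norm _ _
      have hc2v := hC2 (projL V u) hvV
      rcases eq_or_lt_of_le (norm_nonneg (projL V u)) with h0 | hA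
      · rw [← h0]
        nlinarith [norm_nonneg u, sq_nonneg t]
      · have h4 : ‖projL V u‖^4 ≤ ‖u‖^2 * ‖projL V u - projL W (projL V u)‖^2 := by
          nlinarith [hcs, norm_nonneg u, norm_nonneg (projL V u - projL W (projL V u)),
            sq_nonneg (‖projL V u‖)]
        have h5 := mul_le_mul_of_nonneg_left hc2v (sq_nonneg ‖u‖)
        have h6 : ‖projL V u‖^4 * (1 + t^2) ≤ ‖u‖^2 * (t^2 * ‖projL V u‖^2) := by
          nlinarith [mul_le_mul_of_nonneg_right h4 (by positivity : (0:ℝ) ≤ 1 + t^2)]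
        nlinarith [h6, pow_pos hA 2]
    have hub : ∀ y : Vn n, ‖(projL V - projL W) y‖^2 * (1 + t^2) ≤ t^2 * ‖y‖^2 := by
      intro y
      have h1 := hC3 (y - projL W y) (sub_projL_mem W y)
      have h2 := hC1 (projL W y) (projL_mem W y)
      have h3 := norm_sq_split W y
      rw [norm_diff_apply_sq]
      nlinarith [sq_nonneg t]
    have hle : ‖projL V - projL W‖ ≤ t / s := by
      refine ContinuousLinearMap.opNorm_le_bound _ (by positivity) (fun y => ?_)
      refine le_of_sq_le_sq (norm_nonneg _) (by positivity) ?_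
      have h := hub y
      rw [mul_pow, div_pow, hs2, div_mul_eq_mul_div, le_div_iff₀ (by positivity)]
      linarith
    have hge : t / s ≤ ‖projL V - projL W‖ := by
      rcases eq_or_lt_of_le ht0 with h0 | htpos
      · rw [← h0, zero_div]
        exact norm_nonneg _
      · obtain ⟨x, hx1, hx2⟩ := exists_norm_apply_eq φ
        have hxn2 : t ≤ t * ‖x‖ := by
          calc t = ‖φ x‖ := hx2.symm
            _ ≤ t * ‖x‖ := φ.le_opNorm x
        have hxn : ‖x‖ = 1 := le_antisymm hx1 (by nlinarith)
        have hwW : ((x : Vn n) + ((φ x : Vᗮ) : Vn n)) ∈ W := (hmemW _).2 ⟨x, rfl⟩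
        have happ : (projL V - projL W) ((x : Vn n) + ((φ x : Vᗮ) : Vn n))
            = -((φ x : Vᗮ) : Vn n) := by
          rw [ContinuousLinearMap.sub_apply, projL_eq_self hwW, hPw x]
          abel
        have hnx : ‖((x : V) : Vn n)‖ = 1 := (Submodule.norm_coe x).trans hxn
        have hnphi : ‖((φ x : Vᗮ) : Vn n)‖ = t :=
          (Submodule.norm_coe (φ x)).trans (hx2.trans ht.symm)
        have hnw : ‖(x : Vn n) + ((φ x : Vᗮ) : Vn n)‖^2 = 1 + t^2 := by
          rw [pyth x.2 (φ x).2, hnx, hnphi]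
          ring
        have hnw' : ‖(x : Vn n) + ((φ x : Vᗮ) : Vn n)‖ = s := by
          rw [hs, ← hnw]
          exact (Real.sqrt_sq (norm_nonneg _)).symm
        have h5 := (projL V - projL W).le_opNorm ((x : Vn n) + ((φ x : Vᗮ) : Vn n))
        rw [happ, norm_neg, hnw', hnphi] at h5
        rw [div_le_iff₀ hspos]
        linarith
    exact le_antisymm hle hge
end Paper
end
end
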